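/- Consider the lateral error dynamics ỹ' = sin θ̃, θ̃' = -k₁ỹ·(sin θ̃)/θ̃ - k₂θ̃ - k₃(1/d_L + 1/d_R)sin θ̃ with d_L = w - ỹ - ε_w, d_R = w + ỹ - ε_w, k₁,k₂,k₃ > 0, w > ε_w > 0. If the initial condition satisfies k₁ỹ(0)² + θ̃(0)² < (π/2 - ε₁)² for some ε₁ ∈ (0, π/2), then |θ̃(t)| < π/2 - ε₁ for all t as long as d_L, d_R remain positive. -/

import Mathlib

open Real

/-- Forward invariance of the sublevel set: if
k₁ỹ(0)² + θ̃(0)² < (π/2 - ε₁)², then |θ̃(t)| < π/2 - ε₁ as long as the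
lateral safety distances d_L, d_R have remained positive. -/
theorem stmt_8
    (y θ : ℝ → ℝ) (k₁ k₂ k₃ w εw ε₁ : ℝ)
    (hk₁ : 0 < k₁) (hk₂ : 0 < k₂) (hk₃ : 0 < k₃)
    (hw : εw < w) (hεw : 0 < εw)
    (hε₁ : 0 < ε₁) (hε₁' : ε₁ < π / 2)
    (hy : ∀ t, HasDerivAt y (Real.sin (θ t)) t)
    (hθ : ∀ t, HasDerivAt θ
      (-k₁ * y t * (Real.sin (θ t) / θ t) - k₂ * θ t
        - k₃ * (1 / (w - y t - εw) + 1 / (w + y t - εw)) * Real.sin (θ t)) t)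
    (h0 : k₁ * (y 0)^2 + (θ 0)^2 < (π / 2 - ε₁)^2) :
    ∀ t ≥ (0:ℝ),
      (∀ s ∈ Set.Icc (0:ℝ) t, w - y s - εw > 0 ∧ w + y s - εw > 0) →
      |θ t| < π / 2 - ε₁ := by
  intro t ht hd
  set c := π / 2 - ε₁ with hcdef
  have hc0 : 0 < c := by rw [hcdef]; linarith
  have hcπ : c < π / 2 := by rw [hcdef]; linarith
  set L : ℝ → ℝ := fun s => k₁ * (y s)^2 + (θ s)^2 with hLdef
  have hL : ∀ s, HasDerivAt L
      (k₁ * (2 * y s * Real.sin (θ s)) + 2 * θ s *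
        (-k₁ * y s * (Real.sin (θ s) / θ s) - k₂ * θ s
          - k₃ * (1 / (w - y s - εw) + 1 / (w + y s - εw)) * Real.sin (θ s))) s := by
    intro s
    have h1 := ((hy s).fun_pow 2).const_mul k₁
    have h2 := (hθ s).fun_pow 2
    refine (h1.add h2).congr_deriv ?_
    push_cast
    ring
  have hLcont : Continuous L := by
    have hdiff : Differentiable ℝ L := fun s => (hL s).differentiableAt
    exact hdiff.continuous
  have key : ∀ s, |θ s| ≤ c → 0 < w - y s - εw → 0 < w + y s - εw →
      deriv L s ≤ 0 := by
    intro s hθs hdl hdr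
    rw [(hL s).deriv]
    have hθπ : |θ s| ≤ π / 2 := le_trans hθs (le_of_lt hcπ)
    have hπ : 0 < π := Real.pi_pos
    have hsign : 0 ≤ θ s * Real.sin (θ s) := by
      rcases le_or_gt 0 (θ s) with h | h
      · refine mul_nonneg h (Real.sin_nonneg_of_nonneg_of_le_pi h ?_)
        have := (abs_le.mp hθπ).2; linarith
      · have hs2 : Real.sin (θ s) ≤ 0 := by
          have h3 : 0 ≤ Real.sin (-θ s) := by
            refine Real.sin_nonneg_of_nonneg_of_le_pi (by linarith) ?_
            have := (abs_le.mp hθπ).1; linarith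
          rw [Real.sin_neg] at h3; linarith
        nlinarith [mul_nonneg (neg_nonneg.2 h.le) (neg_nonneg.2 hs2)]
    set D := 1 / (w - y s - εw) + 1 / (w + y s - εw) with hDdef
    have hD : 0 < D := by rw [hDdef]; positivity
    have hterm : 0 ≤ 2 * k₃ * D * (θ s * Real.sin (θ s)) := by
      have : (0:ℝ) ≤ 2 * k₃ * D := by positivity
      exact mul_nonneg this hsign
    rcases eq_or_ne (θ s) 0 with h0' | h0'
    · simp [h0']
    · have heq : k₁ * (2 * y s * Real.sin (θ s)) + 2 * θ s *
          (-k₁ * y s * (Real.sin (θ s) / θ s) - k₂ * θ s - k₃ * D * Real.sin (θ s))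
          = -(2 * k₂ * (θ s)^2) - 2 * k₃ * D * (θ s * Real.sin (θ s)) := by
        field_simp
        ring
      rw [heq]
      nlinarith [sq_nonneg (θ s)]
  have hmain : ∀ s ∈ Set.Icc (0:ℝ) t, L s < c^2 := by
    by_contra hfalse
    push_neg at hfalse
    obtain ⟨s₁, hs₁, hs₁L⟩ := hfalse
    have hSeq : {s | s ∈ Set.Icc (0:ℝ) t ∧ c^2 ≤ L s}
        = Set.Icc (0:ℝ) t ∩ L ⁻¹' Set.Ici (c^2) := rfl
    set S := {s | s ∈ Set.Icc (0:ℝ) t ∧ c^2 ≤ L s} with hSdef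
    have hSne : S.Nonempty := ⟨s₁, hs₁, hs₁L⟩
    have hSclosed : IsClosed S := by
      rw [hSeq]
      exact isClosed_Icc.inter (isClosed_Ici.preimage hLcont)
    have hSbdd : BddBelow S := ⟨0, fun x hx => hx.1.1⟩
    set s₀ := sInf S with hs₀def
    have hs₀S : s₀ ∈ S := hSclosed.csInf_mem hSne hSbdd
    have hs₀0 : 0 ≤ s₀ := hs₀S.1.1
    have hlt : ∀ s, 0 ≤ s → s < s₀ → L s < c^2 := by
      intro s hs hss
      by_contra h
      push_neg at h
      have hmem : s ∈ S := ⟨⟨hs, le_trans hss.le hs₀S.1.2⟩, h⟩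
      exact absurd (csInf_le hSbdd hmem) (not_le.mpr hss)
    have hanti : AntitoneOn L (Set.Icc 0 s₀) := by
      apply antitoneOn_of_deriv_nonpos (convex_Icc 0 s₀) hLcont.continuousOn
      · intro x _
        exact (hL x).differentiableAt.differentiableWithinAt
      · intro x hx
        rw [interior_Icc] at hx
        have hxt : x ∈ Set.Icc (0:ℝ) t := ⟨hx.1.le, le_trans hx.2.le hs₀S.1.2⟩
        obtain ⟨hdl, hdr⟩ := hd x hxt
        have hLx : k₁ * (y x)^2 + (θ x)^2 < c^2 := hlt x hx.1.le hx.2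
        have hθc : |θ x| ≤ c := by
          have h1 : (θ x)^2 < c^2 := by nlinarith [sq_nonneg (y x)]
          nlinarith [sq_abs (θ x), abs_nonneg (θ x)]
        exact key x hθc hdl hdr
    have hmono := hanti (Set.left_mem_Icc.mpr hs₀0) (Set.right_mem_Icc.mpr hs₀0) hs₀0
    have hL0 : L 0 < c^2 := h0
    linarith [hs₀S.2]
  have hLt : k₁ * (y t)^2 + (θ t)^2 < c^2 := hmain t (Set.right_mem_Icc.mpr ht)
  have h1 : (θ t)^2 < c^2 := by nlinarith [sq_nonneg (y t)]
  nlinarith [sq_abs (θ t), abs_nonneg (θ t)]
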